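/- arXiv:2308.05065 — 2 statements merged into one kernel-verified Lean document; each statement's English description precedes it below -/
import Mathlib

section
/- Let μ, ν be Borel probability measures on S^n ⊂ R^{n+1} and α ∈ [0,1]. For any ρ ∈ P(S^n), (1−α)d_{W₂}²(μ,ρ) + αd_{W₂}²(ν,ρ) ≥ min over couplings π of μ and ν of ∬ c_α(x,y) dπ(x,y), where c_α(x,y) = 2(1 − ‖(1−α)x + αy‖). -/
open MeasureTheory ProbabilityTheory

/-- The squared quadratic Wasserstein distance on a metric space, as the infimum
of transport costs over all couplings. -/
noncomputable def W2sq {X : Type*} [MetricSpace X] [MeasurableSpace X]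
    (μ ν : Measure X) : ℝ :=
  sInf {c : ℝ | ∃ π : Measure (X × X), IsProbabilityMeasure π ∧
    π.map Prod.fst = μ ∧ π.map Prod.snd = ν ∧ c = ∫ q, dist q.1 q.2 ^ 2 ∂π}

theorem cont_integrable {Y : Type*} [TopologicalSpace Y] [MeasurableSpace Y]
    [OpensMeasurableSpace Y] [CompactSpace Y] (m : Measure Y) [IsFiniteMeasure m]
    {f : Y → ℝ} (hf : Continuous f) :
    Integrable f m := by
  rw [← integrableOn_univ]
  exact hf.continuousOn.integrableOn_compact' isCompact_univ MeasurableSet.univ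

section glue
variable {n : ℕ}
local notation "E" => EuclideanSpace ℝ (Fin (n+1))
local notation "X" => Metric.sphere (0 : EuclideanSpace ℝ (Fin (n+1))) 1

theorem glue (α : ℝ) (h0 : 0 ≤ α) (h1 : α ≤ 1) (μ ν ρ : Measure X)
    [IsProbabilityMeasure μ] [IsProbabilityMeasure ν] [IsProbabilityMeasure ρ]
    (π1 π2 : Measure (X × X)) [IsProbabilityMeasure π1] [IsProbabilityMeasure π2]
    (h1f : π1.map Prod.fst = μ) (h1s : π1.map Prod.snd = ρ)
    (h2f : π2.map Prod.fst = ν) (h2s : π2.map Prod.snd = ρ) :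
    ∃ π : Measure (X × X), IsProbabilityMeasure π ∧
      π.map Prod.fst = μ ∧ π.map Prod.snd = ν ∧
      (∫ q : X × X, 2 * (1 - ‖(1 - α) • (q.1 : E) + α • (q.2 : E)‖) ∂π)
        ≤ (1 - α) * ∫ q : X × X, dist q.1 q.2 ^ 2 ∂π1
          + α * ∫ q : X × X, dist q.1 q.2 ^ 2 ∂π2 := by
  haveI : Nonempty X :=
    ((NormedSpace.sphere_nonempty (x := (0:E)).mpr zero_le_one)).to_subtype
  set σ1 : Measure (X × X) := π1.map Prod.swap with hσ1
  set σ2 : Measure (X × X) := π2.map Prod.swap with hσ2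
  haveI : IsProbabilityMeasure σ1 := Measure.isProbabilityMeasure_map measurable_swap.aemeasurable
  haveI : IsProbabilityMeasure σ2 := Measure.isProbabilityMeasure_map measurable_swap.aemeasurable
  have hσ1f : σ1.fst = ρ := by rw [hσ1, Measure.fst_map_swap]; exact h1s
  have hσ2f : σ2.fst = ρ := by rw [hσ2, Measure.fst_map_swap]; exact h2s
  set κ1 := σ1.condKernel with hκ1
  set κ2 := σ2.condKernel with hκ2
  have hd1 : ρ ⊗ₘ κ1 = σ1 := by rw [← hσ1f]; exact σ1.disintegrate κ1
  have hd2 : ρ ⊗ₘ κ2 = σ2 := by rw [← hσ2f]; exact σ2.disintegrate κ2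
  set κ : Kernel X (X × X) := κ1 ×ₖ κ2 with hκ
  set m : Measure (X × (X × X)) := ρ ⊗ₘ κ with hm
  haveI : IsProbabilityMeasure m := by rw [hm]; infer_instance
  -- marginal identities
  have hg1 : Measurable (fun p : X × (X × X) => (p.1, p.2.1)) :=
    measurable_fst.prodMk (measurable_snd.fst)
  have hg2 : Measurable (fun p : X × (X × X) => (p.1, p.2.2)) :=
    measurable_fst.prodMk (measurable_snd.snd)
  have hm1 : m.map (fun p => (p.1, p.2.1)) = σ1 := by
    rw [← hd1]
    ext s hs
    rw [Measure.map_apply hg1 hs, hm,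
      Measure.compProd_apply (hg1 hs), Measure.compProd_apply hs]
    congr 1
    ext z
    have : (Prod.mk z ⁻¹' ((fun p : X × (X × X) => (p.1, p.2.1)) ⁻¹' s))
        = Prod.fst ⁻¹' (Prod.mk z ⁻¹' s) := rfl
    rw [this, hκ, Kernel.prod_apply]
    rw [← Measure.fst_apply (measurable_prodMk_left hs), Measure.fst_prod]
  have hm2 : m.map (fun p => (p.1, p.2.2)) = σ2 := by
    rw [← hd2]
    ext s hs
    rw [Measure.map_apply hg2 hs, hm,
      Measure.compProd_apply (hg2 hs), Measure.compProd_apply hs]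
    congr 1
    ext z
    have : (Prod.mk z ⁻¹' ((fun p : X × (X × X) => (p.1, p.2.2)) ⁻¹' s))
        = Prod.snd ⁻¹' (Prod.mk z ⁻¹' s) := rfl
    rw [this, hκ, Kernel.prod_apply]
    rw [← Measure.snd_apply (measurable_prodMk_left hs), Measure.snd_prod]
  refine ⟨m.map Prod.snd, Measure.isProbabilityMeasure_map measurable_snd.aemeasurable, ?_, ?_, ?_⟩
  · rw [Measure.map_map measurable_fst measurable_snd]
    have : (Prod.fst ∘ Prod.snd : X × (X × X) → X) = Prod.snd ∘ (fun p => (p.1, p.2.1)) := rfl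
    rw [this, ← Measure.map_map measurable_snd hg1, hm1, hσ1,
      Measure.map_map measurable_snd measurable_swap]
    exact h1f
  · rw [Measure.map_map measurable_snd measurable_snd]
    have : (Prod.snd ∘ Prod.snd : X × (X × X) → X) = Prod.snd ∘ (fun p => (p.1, p.2.2)) := rfl
    rw [this, ← Measure.map_map measurable_snd hg2, hm2, hσ2,
      Measure.map_map measurable_snd measurable_swap]
    exact h2f
  · -- the integral inequality
    have key : ∀ (x y z : X),
        2 * (1 - ‖(1 - α) • (x : E) + α • (y : E)‖)
          ≤ (1 - α) * dist x z ^ 2 + α * dist z y ^ 2 := by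
      intro x y z
      have hx : ‖(x : E)‖ = 1 := by simpa using mem_sphere_zero_iff_norm.mp x.2
      have hy : ‖(y : E)‖ = 1 := by simpa using mem_sphere_zero_iff_norm.mp y.2
      have hz : ‖(z : E)‖ = 1 := by simpa using mem_sphere_zero_iff_norm.mp z.2
      have hdxz : dist x z ^ 2 = 2 - 2 * (inner ℝ (x : E) (z : E) : ℝ) := by
        rw [Subtype.dist_eq, dist_eq_norm, norm_sub_sq_real, hx, hz]; ring
      have hdzy : dist z y ^ 2 = 2 - 2 * (inner ℝ (z : E) (y : E) : ℝ) := by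
        rw [Subtype.dist_eq, dist_eq_norm, norm_sub_sq_real, hz, hy]; ring
      have hiw : (inner ℝ ((1 - α) • (x : E) + α • (y : E)) (z : E) : ℝ)
          = (1 - α) * (inner ℝ (x : E) (z : E) : ℝ) + α * (inner ℝ (y : E) (z : E) : ℝ) := by
        rw [inner_add_left, real_inner_smul_left, real_inner_smul_left]
      have hle : (inner ℝ ((1 - α) • (x : E) + α • (y : E)) (z : E) : ℝ)
          ≤ ‖(1 - α) • (x : E) + α • (y : E)‖ * ‖(z : E)‖ := real_inner_le_norm _ _
      rw [hz, mul_one] at hle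
      have hcomm : (inner ℝ (z : E) (y : E) : ℝ) = (inner ℝ (y : E) (z : E) : ℝ) :=
        real_inner_comm _ _
      rw [hdxz, hdzy, hcomm]
      nlinarith [hle, hiw]
    have hcontc : Continuous (fun p : X × (X × X) =>
        2 * (1 - ‖(1 - α) • ((p.2.1 : E)) + α • ((p.2.2 : E))‖)) := by
      fun_prop
    have hcont1 : Continuous (fun p : X × (X × X) => dist p.2.1 p.1 ^ 2) := by fun_prop
    have hcont2 : Continuous (fun p : X × (X × X) => dist p.1 p.2.2 ^ 2) := by fun_prop
    have hint1 : Integrable (fun p : X × (X × X) => dist p.2.1 p.1 ^ 2) m :=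
      cont_integrable m hcont1
    have hint2 : Integrable (fun p : X × (X × X) => dist p.1 p.2.2 ^ 2) m :=
      cont_integrable m hcont2
    have hintc : Integrable (fun p : X × (X × X) =>
        2 * (1 - ‖(1 - α) • ((p.2.1 : E)) + α • ((p.2.2 : E))‖)) m :=
      cont_integrable m hcontc
    have e0 : (∫ q : X × X, 2 * (1 - ‖(1 - α) • (q.1 : E) + α • (q.2 : E)‖)
          ∂(m.map Prod.snd))
        = ∫ p : X × (X × X), 2 * (1 - ‖(1 - α) • ((p.2.1 : E)) + α • ((p.2.2 : E))‖) ∂m := by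
      rw [integral_map measurable_snd.aemeasurable]
      exact (by fun_prop :
        Continuous (fun q : X × X =>
          2 * (1 - ‖(1 - α) • (q.1 : E) + α • (q.2 : E)‖))).aestronglyMeasurable
    have e1 : (∫ q : X × X, dist q.1 q.2 ^ 2 ∂π1)
        = ∫ p : X × (X × X), dist p.2.1 p.1 ^ 2 ∂m := by
      have a1 : (∫ q : X × X, dist q.2 q.1 ^ 2 ∂σ1)
          = ∫ q : X × X, dist q.1 q.2 ^ 2 ∂π1 := by
        rw [hσ1, integral_map measurable_swap.aemeasurable]
        · rfl
        · exact (by fun_prop :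
            Continuous (fun q : X × X => dist q.2 q.1 ^ 2)).aestronglyMeasurable
      rw [← a1, ← hm1, integral_map hg1.aemeasurable]
      exact (by fun_prop :
        Continuous (fun q : X × X => dist q.2 q.1 ^ 2)).aestronglyMeasurable
    have e2 : (∫ q : X × X, dist q.1 q.2 ^ 2 ∂π2)
        = ∫ p : X × (X × X), dist p.1 p.2.2 ^ 2 ∂m := by
      have a2 : (∫ q : X × X, dist q.1 q.2 ^ 2 ∂σ2)
          = ∫ q : X × X, dist q.1 q.2 ^ 2 ∂π2 := by
        rw [hσ2, integral_map measurable_swap.aemeasurable]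
        · simp_rw [Prod.fst_swap, Prod.snd_swap, dist_comm]
        · exact (by fun_prop :
            Continuous (fun q : X × X => dist q.1 q.2 ^ 2)).aestronglyMeasurable
      rw [← a2, ← hm2, integral_map hg2.aemeasurable]
      exact (by fun_prop :
        Continuous (fun q : X × X => dist q.1 q.2 ^ 2)).aestronglyMeasurable
    rw [e0, e1, e2]
    calc (∫ p : X × (X × X), 2 * (1 - ‖(1 - α) • ((p.2.1 : E)) + α • ((p.2.2 : E))‖) ∂m)
        ≤ ∫ p : X × (X × X),
            ((1 - α) * dist p.2.1 p.1 ^ 2 + α * dist p.1 p.2.2 ^ 2) ∂m := by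
          refine integral_mono hintc ((hint1.const_mul _).add (hint2.const_mul _)) ?_
          intro p
          exact key p.2.1 p.2.2 p.1
      _ = (1 - α) * (∫ p : X × (X × X), dist p.2.1 p.1 ^ 2 ∂m)
            + α * ∫ p : X × (X × X), dist p.1 p.2.2 ^ 2 ∂m := by
          rw [integral_add (hint1.const_mul _) (hint2.const_mul _),
            integral_const_mul, integral_const_mul]
end glue

theorem stmt_18 (n : ℕ) (α : ℝ) (hα : α ∈ Set.Icc (0:ℝ) 1)
    (μ ν ρ : Measure (Metric.sphere (0 : EuclideanSpace ℝ (Fin (n+1))) 1))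
    [IsProbabilityMeasure μ] [IsProbabilityMeasure ν] [IsProbabilityMeasure ρ] :
    (1 - α) * W2sq μ ρ + α * W2sq ν ρ
      ≥ sInf {c : ℝ |
          ∃ π : Measure ((Metric.sphere (0 : EuclideanSpace ℝ (Fin (n+1))) 1)
              × (Metric.sphere (0 : EuclideanSpace ℝ (Fin (n+1))) 1)),
            IsProbabilityMeasure π ∧ π.map Prod.fst = μ ∧ π.map Prod.snd = ν ∧
            c = ∫ q, 2 * (1 - ‖(1 - α) • (q.1 : EuclideanSpace ℝ (Fin (n+1)))
                  + α • (q.2 : EuclideanSpace ℝ (Fin (n+1)))‖) ∂π} := by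
  obtain ⟨h0, h1⟩ := hα
  set S : Set ℝ := {c : ℝ |
          ∃ π : Measure ((Metric.sphere (0 : EuclideanSpace ℝ (Fin (n+1))) 1) × (Metric.sphere (0 : EuclideanSpace ℝ (Fin (n+1))) 1)),
            IsProbabilityMeasure π ∧ π.map Prod.fst = μ ∧ π.map Prod.snd = ν ∧
            c = ∫ q, 2 * (1 - ‖(1 - α) • (q.1 : EuclideanSpace ℝ (Fin (n+1)))
                  + α • (q.2 : EuclideanSpace ℝ (Fin (n+1)))‖) ∂π} with hS
  set A : Set ℝ := {c : ℝ | ∃ π : Measure ((Metric.sphere (0 : EuclideanSpace ℝ (Fin (n+1))) 1) × (Metric.sphere (0 : EuclideanSpace ℝ (Fin (n+1))) 1)), IsProbabilityMeasure π ∧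
    π.map Prod.fst = μ ∧ π.map Prod.snd = ρ ∧ c = ∫ q, dist q.1 q.2 ^ 2 ∂π} with hA
  set B : Set ℝ := {c : ℝ | ∃ π : Measure ((Metric.sphere (0 : EuclideanSpace ℝ (Fin (n+1))) 1) × (Metric.sphere (0 : EuclideanSpace ℝ (Fin (n+1))) 1)), IsProbabilityMeasure π ∧
    π.map Prod.fst = ν ∧ π.map Prod.snd = ρ ∧ c = ∫ q, dist q.1 q.2 ^ 2 ∂π} with hB
  have hWA : W2sq μ ρ = sInf A := rfl
  have hWB : W2sq ν ρ = sInf B := rfl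
  have hAne : A.Nonempty := by
    refine ⟨∫ q : (Metric.sphere (0 : EuclideanSpace ℝ (Fin (n+1))) 1) × (Metric.sphere (0 : EuclideanSpace ℝ (Fin (n+1))) 1), dist q.1 q.2 ^ 2 ∂(μ.prod ρ), μ.prod ρ, inferInstance, ?_, ?_, rfl⟩
    · exact Measure.fst_prod
    · exact Measure.snd_prod
  have hBne : B.Nonempty := by
    refine ⟨∫ q : (Metric.sphere (0 : EuclideanSpace ℝ (Fin (n+1))) 1) × (Metric.sphere (0 : EuclideanSpace ℝ (Fin (n+1))) 1), dist q.1 q.2 ^ 2 ∂(ν.prod ρ), ν.prod ρ, inferInstance, ?_, ?_, rfl⟩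
    · exact Measure.fst_prod
    · exact Measure.snd_prod
  have hSbdd : BddBelow S := by
    refine ⟨0, fun c hc => ?_⟩
    obtain ⟨π, hπ, -, -, rfl⟩ := hc
    refine integral_nonneg fun q => ?_
    simp only [Pi.zero_apply]
    have hle : ‖(1 - α) • (q.1 : EuclideanSpace ℝ (Fin (n+1)))
        + α • (q.2 : EuclideanSpace ℝ (Fin (n+1)))‖ ≤ 1 := by
      have hx : ‖(q.1 : EuclideanSpace ℝ (Fin (n+1)))‖ = 1 := by
        simpa using mem_sphere_zero_iff_norm.mp q.1.2
      have hy : ‖(q.2 : EuclideanSpace ℝ (Fin (n+1)))‖ = 1 := by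
        simpa using mem_sphere_zero_iff_norm.mp q.2.2
      calc ‖(1 - α) • (q.1 : EuclideanSpace ℝ (Fin (n+1)))
            + α • (q.2 : EuclideanSpace ℝ (Fin (n+1)))‖
          ≤ ‖(1 - α) • (q.1 : EuclideanSpace ℝ (Fin (n+1)))‖
            + ‖α • (q.2 : EuclideanSpace ℝ (Fin (n+1)))‖ := norm_add_le _ _
        _ = |1 - α| * 1 + |α| * 1 := by rw [norm_smul, norm_smul, hx, hy]; rfl
        _ = 1 := by rw [abs_of_nonneg (by linarith), abs_of_nonneg h0]; ring
    nlinarith [hle]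
  have hkey : ∀ a ∈ A, ∀ b ∈ B, sInf S ≤ (1 - α) * a + α * b := by
    rintro a ⟨π1, hπ1, h1f, h1s, rfl⟩ b ⟨π2, hπ2, h2f, h2s, rfl⟩
    obtain ⟨π, hπ, hf, hs, hle⟩ := glue α h0 h1 μ ν ρ π1 π2 h1f h1s h2f h2s
    exact le_trans (csInf_le hSbdd ⟨π, hπ, hf, hs, rfl⟩) hle
  rw [ge_iff_le, hWA, hWB]
  refine le_of_forall_pos_le_add fun ε hε => ?_
  obtain ⟨a, haA, ha⟩ := Real.lt_sInf_add_pos hAne hε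
  obtain ⟨b, hbB, hb⟩ := Real.lt_sInf_add_pos hBne hε
  have h2 := mul_le_mul_of_nonneg_left ha.le (by linarith : (0:ℝ) ≤ 1 - α)
  have h3 := mul_le_mul_of_nonneg_left hb.le h0
  calc sInf S ≤ (1 - α) * a + α * b := hkey a haA b hbB
    _ ≤ (1 - α) * (sInf A + ε) + α * (sInf B + ε) := by linarith
    _ ≤ (1 - α) * sInf A + α * sInf B + ε := by nlinarith
end

section
/- Let Φ be a surjective isometry of the quadratic Wasserstein space W₂(S^n, ‖·‖) (probability measures on the sphere with the chordal metric). Then Φ maps Dirac measures to Dirac measures, and the induced map ψ: S^n → S^n defined by Φ(δ_x) = δ_{ψ(x)} is an isometry of (S^n, ‖·‖). -/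
open MeasureTheory

/-- The quadratic Wasserstein distance. -/
noncomputable def W2dist {X : Type*} [MetricSpace X] [MeasurableSpace X]
    (μ ν : Measure X) : ℝ :=
  Real.sqrt (W2sq μ ν)

section helpers

variable {X : Type*} [MetricSpace X] [MeasurableSpace X] [MeasurableSingletonClass X]

lemma aux_prob_eq_dirac (μ : Measure X) [IsProbabilityMeasure μ] {x : X} (h : μ {x}ᶜ = 0) :
    μ = Measure.dirac x := by
  ext s hs
  rw [Measure.dirac_apply' _ hs]
  by_cases hx : x ∈ s
  · have h1 : μ sᶜ = 0 := measure_mono_null (by simpa using Set.singleton_subset_iff.2 hx) h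
    have : μ s = 1 := by
      have := prob_compl_eq_zero_iff hs |>.1 h1
      simpa using this
    simp [this, Set.indicator_of_mem hx]
  · have : μ s = 0 := measure_mono_null (by intro y hy; simp; rintro rfl; exact hx hy) h
    simp [this, Set.indicator_of_notMem hx]

lemma aux_dirac_inj {p q : X} (h : Measure.dirac p = Measure.dirac q) : p = q := by
  by_contra hne
  have := congrArg (fun m : Measure X => m {q}) h
  simp only [Measure.dirac_apply] at this
  rw [Set.indicator_of_notMem (by simpa using hne)] at this
  simp at this

lemma aux_coupling_dirac {a b : X} {π : Measure (X × X)} [IsProbabilityMeasure π]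
    (h1 : π.map Prod.fst = Measure.dirac a) (h2 : π.map Prod.snd = Measure.dirac b) :
    π = Measure.dirac (a, b) := by
  apply aux_prob_eq_dirac
  have hA : π (Prod.fst ⁻¹' ({a}ᶜ)) = 0 := by
    rw [← Measure.map_apply measurable_fst (measurableSet_singleton a).compl, h1]
    simp [Measure.dirac_apply' _ (measurableSet_singleton a).compl]
  have hB : π (Prod.snd ⁻¹' ({b}ᶜ)) = 0 := by
    rw [← Measure.map_apply measurable_snd (measurableSet_singleton b).compl, h2]
    simp [Measure.dirac_apply' _ (measurableSet_singleton b).compl]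
  refine measure_mono_null ?_ (measure_union_null hA hB)
  intro p hp
  simp only [Set.mem_compl_iff, Set.mem_singleton_iff] at hp
  by_cases h : p.1 = a
  · right
    simp only [Set.mem_preimage, Set.mem_compl_iff, Set.mem_singleton_iff]
    intro hb
    exact hp (Prod.ext h hb)
  · left
    simpa using h

lemma aux_W2sq_dirac (a b : X) :
    W2sq (Measure.dirac a) (Measure.dirac b) = dist a b ^ 2 := by
  unfold W2sq
  have : {c : ℝ | ∃ π : Measure (X × X), IsProbabilityMeasure π ∧
      π.map Prod.fst = Measure.dirac a ∧ π.map Prod.snd = Measure.dirac b ∧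
      c = ∫ q, dist q.1 q.2 ^ 2 ∂π} = {dist a b ^ 2} := by
    ext c
    simp only [Set.mem_setOf_eq, Set.mem_singleton_iff]
    constructor
    · rintro ⟨π, hπ, h1, h2, rfl⟩
      rw [aux_coupling_dirac h1 h2, integral_dirac]
    · rintro rfl
      exact ⟨Measure.dirac (a, b), inferInstance,
        by rw [Measure.map_dirac' measurable_fst],
        by rw [Measure.map_dirac' measurable_snd],
        by rw [integral_dirac]⟩
  rw [this, csInf_singleton]

lemma aux_W2dist_dirac (a b : X) :
    W2dist (Measure.dirac a) (Measure.dirac b) = dist a b := by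
  rw [W2dist, aux_W2sq_dirac, Real.sqrt_sq dist_nonneg]

end helpers

section sphere

variable {n : ℕ}

local notation "E" => EuclideanSpace ℝ (Fin (n+1))
local notation "S" => Metric.sphere (0 : EuclideanSpace ℝ (Fin (n+1))) 1

lemma aux_norm_one (x : S) : ‖(x : E)‖ = 1 := by
  have := x.2
  rwa [mem_sphere_zero_iff_norm] at this

/-- The antipode on the sphere. -/
noncomputable def sphNeg (x : S) : S :=
  ⟨-(x : E), by rw [mem_sphere_zero_iff_norm, norm_neg]; exact aux_norm_one x⟩

lemma aux_dist_le_two (x y : S) : dist x y ≤ 2 := by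
  rw [Subtype.dist_eq, dist_eq_norm]
  calc ‖(x : E) - y‖ ≤ ‖(x : E)‖ + ‖(y : E)‖ := norm_sub_le _ _
  _ = 2 := by rw [aux_norm_one, aux_norm_one]; norm_num

lemma aux_dist_eq_two_iff (x y : S) : dist x y = 2 ↔ y = sphNeg x := by
  have hx := aux_norm_one x
  have hy := aux_norm_one y
  have key : dist x y ^ 2 = 2 - 2 * (inner ℝ (x : E) (y : E) : ℝ) := by
    rw [Subtype.dist_eq, dist_eq_norm, @norm_sub_sq_real, hx, hy]
    ring
  constructor
  · intro h
    have hinner : (inner ℝ (x : E) (y : E) : ℝ) = -1 := by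
      rw [h] at key; nlinarith
    have : (inner ℝ (x : E) (-(y : E)) : ℝ) = 1 := by
      rw [inner_neg_right, hinner]; norm_num
    have hxy : (x : E) = -(y : E) :=
      (inner_eq_one_iff_of_norm_eq_one (𝕜 := ℝ) hx (by rw [norm_neg]; exact hy)).1 this
    apply Subtype.ext
    show (y : E) = -(x : E)
    rw [hxy]; simp
  · intro h
    rw [Subtype.dist_eq, h]
    show dist (x : E) (-(x : E)) = 2
    rw [dist_eq_norm, sub_neg_eq_add, ← two_smul ℝ (x : E), norm_smul]
    simp [hx]

lemma aux_maxdist (μ ν : Measure S) [IsProbabilityMeasure μ] [IsProbabilityMeasure ν]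
    (h : W2dist μ ν = 2) : ∃ x : S, μ = Measure.dirac x ∧ ν = Measure.dirac (sphNeg x) := by
  set f : S × S → ℝ := fun q => dist q.1 q.2 ^ 2 with hf
  have hfc : Continuous f := by
    apply Continuous.pow
    exact continuous_dist.comp (continuous_fst.prodMk continuous_snd)
  have hnonneg : ∀ q : S × S, 0 ≤ f q := fun q => sq_nonneg _
  have hbound : ∀ q : S × S, f q ≤ 4 := fun q => by
    have h1 := aux_dist_le_two q.1 q.2
    have h2 : (0:ℝ) ≤ dist q.1 q.2 := dist_nonneg
    show dist q.1 q.2 ^ 2 ≤ 4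
    nlinarith
  have hint : Integrable f (μ.prod ν) := by
    refine Integrable.mono' (integrable_const 4) hfc.aestronglyMeasurable
      (ae_of_all _ fun q => ?_)
    rw [Real.norm_eq_abs, abs_of_nonneg (hnonneg q)]
    exact hbound q
  set c0 := ∫ q, f q ∂(μ.prod ν) with hc0
  have hbdd : BddBelow {c : ℝ | ∃ π : Measure (S × S), IsProbabilityMeasure π ∧
      π.map Prod.fst = μ ∧ π.map Prod.snd = ν ∧ c = ∫ q, dist q.1 q.2 ^ 2 ∂π} := by
    refine ⟨0, ?_⟩
    rintro c ⟨π, hπ, -, -, rfl⟩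
    exact integral_nonneg fun q => sq_nonneg _
  have hmem : c0 ∈ {c : ℝ | ∃ π : Measure (S × S), IsProbabilityMeasure π ∧
      π.map Prod.fst = μ ∧ π.map Prod.snd = ν ∧ c = ∫ q, dist q.1 q.2 ^ 2 ∂π} :=
    ⟨μ.prod ν, inferInstance, by simp [Measure.map_fst_prod],
      by simp [Measure.map_snd_prod], rfl⟩
  have h4 : W2sq μ ν = 4 := by
    have hge : 0 ≤ W2sq μ ν := by
      apply Real.sInf_nonneg
      rintro c ⟨π, hπ, -, -, rfl⟩
      exact integral_nonneg fun q => sq_nonneg _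
    have := Real.sq_sqrt hge
    rw [show Real.sqrt (W2sq μ ν) = W2dist μ ν from rfl, h] at this
    linarith
  have hle : (4:ℝ) ≤ c0 := by
    have := csInf_le hbdd hmem
    rw [show sInf {c : ℝ | ∃ π : Measure (S × S), IsProbabilityMeasure π ∧
      π.map Prod.fst = μ ∧ π.map Prod.snd = ν ∧ c = ∫ q, dist q.1 q.2 ^ 2 ∂π}
      = W2sq μ ν from rfl, h4] at this
    exact this
  have hge4 : c0 ≤ 4 := by
    calc c0 ≤ ∫ _q, (4:ℝ) ∂(μ.prod ν) := integral_mono hint (integrable_const 4) hbound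
    _ = 4 := by simp
  have heq : ∫ q, ((4:ℝ) - f q) ∂(μ.prod ν) = 0 := by
    rw [integral_sub (integrable_const 4) hint]
    have : ∫ _q, (4:ℝ) ∂(μ.prod ν) = 4 := by simp
    rw [this, ← hc0]
    linarith
  have hae : (fun q => (4:ℝ) - f q) =ᵐ[μ.prod ν] 0 := by
    rw [← integral_eq_zero_iff_of_nonneg (fun q => sub_nonneg.2 (hbound q))
      ((integrable_const 4).sub hint)]
    exact heq
  have hae2 : ∀ᵐ q ∂(μ.prod ν), q.2 = sphNeg q.1 := by
    filter_upwards [hae] with q hq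
    have hq' : (4:ℝ) - f q = 0 := hq
    have h2 : dist q.1 q.2 = 2 := by
      have h1 := aux_dist_le_two q.1 q.2
      have h3 : (0:ℝ) ≤ dist q.1 q.2 := dist_nonneg
      have : dist q.1 q.2 ^ 2 = 4 := by simp only [hf] at hq'; linarith
      nlinarith
    exact (aux_dist_eq_two_iff q.1 q.2).1 h2
  have hP : ∀ᵐ x ∂μ, ν = Measure.dirac (sphNeg x) := by
    filter_upwards [Measure.ae_ae_of_ae_prod hae2] with x hx
    apply aux_prob_eq_dirac
    rw [ae_iff] at hx
    exact hx
  haveI : (ae μ).NeBot := by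
    rw [ae_neBot]
    exact IsProbabilityMeasure.ne_zero μ
  obtain ⟨x0, hx0⟩ := hP.exists
  have hsame : ∀ᵐ x ∂μ, x = x0 := by
    filter_upwards [hP] with x hx
    have hd := aux_dirac_inj (hx.symm.trans hx0)
    have : -(x : E) = -(x0 : E) := congrArg Subtype.val hd
    exact Subtype.ext (neg_inj.1 this)
  have hμ : μ = Measure.dirac x0 := by
    apply aux_prob_eq_dirac
    rw [ae_iff] at hsame
    exact hsame
  exact ⟨x0, hμ, hx0⟩

end sphere

theorem stmt_19 (n : ℕ)
    (Φ : Measure (Metric.sphere (0 : EuclideanSpace ℝ (Fin (n+1))) 1)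
      → Measure (Metric.sphere (0 : EuclideanSpace ℝ (Fin (n+1))) 1))
    (hprob : ∀ μ, IsProbabilityMeasure μ → IsProbabilityMeasure (Φ μ))
    (hsurj : ∀ ν : Measure (Metric.sphere (0 : EuclideanSpace ℝ (Fin (n+1))) 1),
      IsProbabilityMeasure ν → ∃ μ, IsProbabilityMeasure μ ∧ Φ μ = ν)
    (hiso : ∀ μ ν : Measure (Metric.sphere (0 : EuclideanSpace ℝ (Fin (n+1))) 1),
      IsProbabilityMeasure μ → IsProbabilityMeasure ν →
        W2dist (Φ μ) (Φ ν) = W2dist μ ν) :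
    ∃ ψ : Metric.sphere (0 : EuclideanSpace ℝ (Fin (n+1))) 1
        → Metric.sphere (0 : EuclideanSpace ℝ (Fin (n+1))) 1,
      Isometry ψ ∧ ∀ x, Φ (Measure.dirac x) = Measure.dirac (ψ x) := by
  classical
  have key : ∀ x, ∃ y, Φ (Measure.dirac x) = Measure.dirac y := by
    intro x
    have h2 : W2dist (Φ (Measure.dirac x)) (Φ (Measure.dirac (sphNeg x))) = 2 := by
      rw [hiso _ _ inferInstance inferInstance, aux_W2dist_dirac]
      exact (aux_dist_eq_two_iff x (sphNeg x)).2 rfl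
    haveI := hprob _ (inferInstance : IsProbabilityMeasure (Measure.dirac x))
    haveI := hprob _ (inferInstance : IsProbabilityMeasure (Measure.dirac (sphNeg x)))
    obtain ⟨a, ha, _⟩ := aux_maxdist _ _ h2
    exact ⟨a, ha⟩
  choose ψ hψ using key
  refine ⟨ψ, ?_, hψ⟩
  apply Isometry.of_dist_eq
  intro x y
  have h := hiso (Measure.dirac x) (Measure.dirac y) inferInstance inferInstance
  rwa [hψ x, hψ y, aux_W2dist_dirac, aux_W2dist_dirac] at h
end
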